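/- There exist a group G, a finite alphabet A closed under a formal inversion and mapping onto a semigroup generating set of G, and a regular language L ⊆ A* mapping onto G, such that there is a constant k with D(aw₁b, w₂) ≤ k for all w₁, w₂ ∈ L and all a, b ∈ A ∪ {ε} satisfying π(aw₁b) = π(w₂), and yet (A, L) is not a biautomatic structure. (In particular, Lemma 2.5.5 of Epstein et al., 'Word Processing in Groups', is false as stated.) -/

import Mathlib

/-- The evaluation of a word over the alphabet `A` in the group `G`, via the letter map `φ`;
this is the monoid homomorphism `π : A* → G`. -/
def evalWord {A G : Type*} [Group G] (φ : A → G) (w : List A) : G := (w.map φ).prod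

/-- The word metric on `G` relative to the letter map `φ : A → G`:
`d(g,h)` is the least length of a word `u` with `π(u) = g⁻¹h`. -/
noncomputable def wordDist {A G : Type*} [Group G] (φ : A → G) (g h : G) : ℕ :=
  sInf {n | ∃ u : List A, u.length = n ∧ evalWord φ u = g⁻¹ * h}

/-- The synchronous uniform distance between two words: the maximum over `n` of the
word-metric distance between the values of the length-`n` prefixes. -/
noncomputable def unifDist {A G : Type*} [Group G] (φ : A → G) (w₁ w₂ : List A) : ℕ :=
  sSup {m | ∃ n : ℕ, m = wordDist φ (evalWord φ (w₁.take n)) (evalWord φ (w₂.take n))}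

/-- The formal inverse of a word: reverse it and invert each letter via `ι`. -/
def wordInv {A : Type*} (ι : A → A) (w : List A) : List A := w.reverse.map ι

/-- `(A, L)` is an automatic structure for the group `G` (with letter map `φ`):
`L` is regular, maps onto `G`, and satisfies the one-sided fellow traveller property. -/
def IsAutomaticStructure {A G : Type*} [Group G] (φ : A → G) (L : Language A) : Prop :=
  L.IsRegular ∧ (∀ g : G, ∃ w ∈ L, evalWord φ w = g) ∧
    ∃ k : ℕ, ∀ w₁ ∈ L, ∀ w₂ ∈ L, ∀ a : Option A,
      evalWord φ (w₁ ++ a.toList) = evalWord φ w₂ →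
        unifDist φ (w₁ ++ a.toList) w₂ ≤ k

/-- `(A, L)` is a biautomatic structure: both `(A, L)` and `(A, L⁻¹)` are automatic. -/
def IsBiautomaticStructure {A G : Type*} [Group G] (φ : A → G) (ι : A → A)
    (L : Language A) : Prop :=
  IsAutomaticStructure φ L ∧
    IsAutomaticStructure φ ((wordInv ι '' (L : Set (List A)) : Set (List A)) : Language A)


namespace L255

inductive Ab : Type | x | y | e
deriving DecidableEq

instance : Fintype Ab := ⟨{Ab.x, Ab.y, Ab.e}, fun a => by cases a <;> simp⟩

def val : Ab → ℤ
  | .x => 1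
  | .y => -1
  | .e => 0

def phi : Ab → Multiplicative ℤ := fun a => Multiplicative.ofAdd (val a)

def iot : Ab → Ab
  | .x => .y
  | .y => .x
  | .e => .e

def sv (w : List Ab) : ℤ := (w.map val).sum

@[simp] lemma sv_nil : sv [] = 0 := rfl
@[simp] lemma sv_cons (a : Ab) (t : List Ab) : sv (a :: t) = val a + sv t := rfl
@[simp] lemma sv_append (u v : List Ab) : sv (u ++ v) = sv u + sv v := by
  simp [sv]
@[simp] lemma sv_replicate (n : ℕ) (a : Ab) : sv (List.replicate n a) = n * val a := by
  simp [sv, List.sum_replicate, mul_comm]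

lemma val_e : val Ab.e = 0 := rfl

lemma eval_eq (w : List Ab) : evalWord phi w = Multiplicative.ofAdd (sv w) := by
  induction w with
  | nil => rfl
  | cons a t ih =>
      show phi a * evalWord phi t = _
      rw [ih]; rfl

lemma sv_natAbs_le (w : List Ab) : (sv w).natAbs ≤ w.length := by
  induction w with
  | nil => simp
  | cons a t ih => have : (val a).natAbs ≤ 1 := by cases a <;> simp [val]
                   simp only [sv_cons, List.length_cons]; omega

def stdWord (d : ℤ) : List Ab := List.replicate d.natAbs (if 0 ≤ d then Ab.x else Ab.y)

lemma sv_stdWord (d : ℤ) : sv (stdWord d) = d := by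
  unfold stdWord
  rw [sv_replicate]
  split_ifs with h
  · rw [show val Ab.x = 1 from rfl]; omega
  · rw [show val Ab.y = -1 from rfl]; omega

lemma wordDist_ofAdd (p q : ℤ) :
    wordDist phi (Multiplicative.ofAdd p) (Multiplicative.ofAdd q) = (q - p).natAbs := by
  unfold wordDist
  have hiff : ∀ u : List Ab,
      (evalWord phi u = (Multiplicative.ofAdd p)⁻¹ * Multiplicative.ofAdd q) ↔ sv u = q - p := by
    intro u
    rw [eval_eq, ← ofAdd_neg, ← ofAdd_add]
    constructor
    · intro h; have := Multiplicative.ofAdd.injective h; omega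
    · intro h; rw [h]; congr 1; omega
  apply le_antisymm
  · exact Nat.sInf_le ⟨stdWord (q - p), by simp [stdWord], (hiff _).2 (sv_stdWord _)⟩
  · refine le_csInf ?_ ?_
    · exact ⟨(stdWord (q - p)).length, stdWord (q - p), rfl, (hiff _).2 (sv_stdWord _)⟩
    rintro n ⟨u, hl, he⟩
    have := sv_natAbs_le u
    rw [(hiff u).1 he] at this
    omega

lemma wordDist_eval (u v : List Ab) :
    wordDist phi (evalWord phi u) (evalWord phi v) = (sv v - sv u).natAbs := by
  rw [eval_eq, eval_eq, wordDist_ofAdd]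

lemma unifDist_le (w₁ w₂ : List Ab) (k : ℕ)
    (h : ∀ j, (sv (w₁.take j) - sv (w₂.take j)).natAbs ≤ k) :
    unifDist phi w₁ w₂ ≤ k := by
  apply csSup_le
  · exact ⟨_, 0, rfl⟩
  · rintro m ⟨j, rfl⟩
    rw [wordDist_eval]
    have := h j; omega

lemma unifDist_ge (w₁ w₂ : List Ab) (j : ℕ) :
    (sv (w₂.take j) - sv (w₁.take j)).natAbs ≤ unifDist phi w₁ w₂ := by
  have hb : BddAbove {m | ∃ n, m = wordDist phi (evalWord phi (w₁.take n))
      (evalWord phi (w₂.take n))} := by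
    refine ⟨w₁.length + w₂.length, ?_⟩
    rintro m ⟨n, rfl⟩
    rw [wordDist_eval]
    have h1 := sv_natAbs_le (w₁.take n)
    have h2 := sv_natAbs_le (w₂.take n)
    have l1 : (w₁.take n).length ≤ w₁.length := by
      rw [List.length_take]; omega
    have l2 : (w₂.take n).length ≤ w₂.length := by
      rw [List.length_take]; omega
    omega
  exact le_csSup hb ⟨j, (wordDist_eval _ _).symm⟩

lemma sv_take_append (u v : List Ab) (j : ℕ) :
    sv ((u ++ v).take j) = sv (u.take j) + sv (v.take (j - u.length)) := by
  rw [List.take_append, sv_append]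

lemma sv_take_replicate (n j : ℕ) (a : Ab) :
    sv ((List.replicate n a).take j) = (min j n : ℕ) * val a := by
  rw [List.take_replicate, sv_replicate]

lemma opt_len (o : Option Ab) : o.toList.length ≤ 1 := by cases o <;> simp

lemma opt_sv (o : Option Ab) : (sv o.toList).natAbs ≤ 1 := by
  cases o with
  | none => simp
  | some a => cases a <;> simp [val]

lemma opt_sv_take (o : Option Ab) (j : ℕ) : (sv (o.toList.take j)).natAbs ≤ 1 := by
  cases o with
  | none => simp
  | some a =>
      cases j with
      | zero => simp
      | succ j => rw [show (Option.some a).toList = [a] from rfl, List.take_succ_cons,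
                    List.take_nil]; cases a <;> simp [val]

lemma fellow (a b : Option Ab) (c c' : Ab) (n m n' m' : ℕ)
    (hv : val c = 1 ∨ val c = -1) (hv' : val c' = 1 ∨ val c' = -1)
    (heq : evalWord phi
        (a.toList ++ (List.replicate n c ++ List.replicate m Ab.e) ++ b.toList) =
      evalWord phi (List.replicate n' c' ++ List.replicate m' Ab.e)) :
    unifDist phi (a.toList ++ (List.replicate n c ++ List.replicate m Ab.e) ++ b.toList)
      (List.replicate n' c' ++ List.replicate m' Ab.e) ≤ 9 := by
  have hsv : sv (a.toList ++ (List.replicate n c ++ List.replicate m Ab.e) ++ b.toList) =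
      sv (List.replicate n' c' ++ List.replicate m' Ab.e) :=
    Multiplicative.ofAdd.injective (by rw [← eval_eq, ← eval_eq]; exact heq)
  apply unifDist_le
  intro j
  have h1 := opt_sv_take a j
  have h2 := opt_sv_take b (j - (a.toList.length + (n + m)))
  have h3 := opt_sv a
  have h4 := opt_sv b
  have h5 := opt_len a
  have h6 := opt_len b
  simp only [sv_take_append, sv_take_replicate, sv_append, sv_replicate,
    List.length_append, List.length_replicate, val_e, mul_zero, add_zero, mul_one] at hsv ⊢
  rcases hv with hv | hv <;> rcases hv' with hv' | hv' <;>
    rw [hv, hv'] at hsv ⊢ <;> omega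

/-! ### The DFA -/

inductive St : Type | s0 | sx | sy | se | dead
deriving DecidableEq

instance : Fintype St :=
  ⟨{St.s0, St.sx, St.sy, St.se, St.dead}, fun a => by cases a <;> simp⟩

def step : St → Ab → St
  | .s0, .x => .sx
  | .s0, .y => .sy
  | .s0, .e => .se
  | .sx, .x => .sx
  | .sx, .y => .dead
  | .sx, .e => .se
  | .sy, .x => .dead
  | .sy, .y => .sy
  | .sy, .e => .se
  | .se, .e => .se
  | .se, _ => .dead
  | .dead, _ => .dead

def dfa : DFA Ab St := ⟨step, .s0, {q | q ≠ .dead}⟩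

def Lp (w : List Ab) : Prop :=
  (∃ n m : ℕ, w = List.replicate n Ab.x ++ List.replicate m Ab.e) ∨
    (∃ n m : ℕ, w = List.replicate n Ab.y ++ List.replicate m Ab.e)

def L : Language Ab := setOf Lp

lemma mem_L {w : List Ab} : w ∈ L ↔ Lp w := Iff.rfl

def LangOf : St → List Ab → Prop
  | .s0, w => Lp w
  | .sx, w => ∃ n m : ℕ, w = List.replicate n Ab.x ++ List.replicate m Ab.e
  | .sy, w => ∃ n m : ℕ, w = List.replicate n Ab.y ++ List.replicate m Ab.e
  | .se, w => ∃ m : ℕ, w = List.replicate m Ab.e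
  | .dead, _ => False

lemma cons_eq_iff (c : Ab) (t : List Ab) (d : Ab) (hd : d ≠ Ab.e) :
    (∃ n m : ℕ, (c :: t : List Ab) = List.replicate n d ++ List.replicate m Ab.e) ↔
      ((c = d ∧ ∃ n m : ℕ, t = List.replicate n d ++ List.replicate m Ab.e) ∨
        (c = Ab.e ∧ ∃ m : ℕ, t = List.replicate m Ab.e)) := by
  constructor
  · rintro ⟨n, m, h⟩
    cases n with
    | zero =>
        cases m with
        | zero => simp only [List.replicate_zero, List.nil_append] at h; exact absurd h (by simp)
        | succ m =>
            rw [List.replicate_succ] at h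
            simp only [List.replicate_zero, List.nil_append, List.cons.injEq] at h
            exact Or.inr ⟨h.1, m, h.2⟩
    | succ n =>
        rw [List.replicate_succ] at h
        simp only [List.cons_append, List.cons.injEq] at h
        exact Or.inl ⟨h.1, n, m, h.2⟩
  · rintro (⟨rfl, n, m, rfl⟩ | ⟨rfl, m, rfl⟩)
    · exact ⟨n + 1, m, by rw [List.replicate_succ]; rfl⟩
    · exact ⟨0, m + 1, by rw [List.replicate_succ]; rfl⟩

lemma cons_eq_e_iff (c : Ab) (t : List Ab) :
    (∃ m : ℕ, (c :: t : List Ab) = List.replicate m Ab.e) ↔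
      (c = Ab.e ∧ ∃ m : ℕ, t = List.replicate m Ab.e) := by
  constructor
  · rintro ⟨m, h⟩
    cases m with
    | zero => exact absurd h (by simp)
    | succ m =>
        rw [List.replicate_succ] at h
        simp only [List.cons.injEq] at h
        exact ⟨h.1, m, h.2⟩
  · rintro ⟨rfl, m, rfl⟩
    exact ⟨m + 1, by rw [List.replicate_succ]⟩

lemma eval_char : ∀ (w : List Ab) (q : St), dfa.evalFrom q w ∈ dfa.accept ↔ LangOf q w := by
  intro w
  induction w with
  | nil =>
      intro q
      cases q <;> simp [dfa, DFA.evalFrom, LangOf, Lp]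
  | cons c t ih =>
      intro q
      have hst : dfa.evalFrom q (c :: t) = dfa.evalFrom (step q c) t := rfl
      rw [hst, ih]
      cases q <;> cases c <;>
        simp [step, LangOf, Lp, cons_eq_iff _ _ Ab.x (by simp), cons_eq_iff _ _ Ab.y (by simp),
          cons_eq_e_iff]

lemma accepts_eq : dfa.accepts = L := by
  ext w
  rw [DFA.mem_accepts]
  exact eval_char w .s0

lemma cons_mem_closure : ∀ (t : List Ab) (a : Ab),
    evalWord phi (a :: t) ∈ Subsemigroup.closure (Set.range phi) := by
  intro t
  induction t with
  | nil =>
      intro a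
      have h : evalWord phi [a] = phi a := by simp [evalWord]
      rw [h]; exact Subsemigroup.subset_closure ⟨a, rfl⟩
  | cons b t ih =>
      intro a
      have h : evalWord phi (a :: b :: t) = phi a * evalWord phi (b :: t) := by
        simp [evalWord]
      rw [h]
      exact Subsemigroup.mul_mem _ (Subsemigroup.subset_closure ⟨a, rfl⟩) (ih b)

end L255

/-- Lemma 2.5.5 of Epstein et al. is false as stated: there exist a group `G`, a finite
alphabet `A` with a formal inversion mapping onto a semigroup generating set of `G`, and a
regular language `L ⊆ A*` mapping onto `G`, such that the two-sided fellow traveller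
condition holds for some constant `k`, and yet `(A, L)` is not a biautomatic structure. -/

theorem lemma_2_5_5_false :
    ∃ (G : Type) (instG : Group G) (A : Type) (instA : Fintype A)
      (φ : A → G) (ι : A → A) (L : Language A),
      haveI := instG; haveI := instA;
      Subsemigroup.closure (Set.range φ) = ⊤ ∧
      (∀ a : A, φ (ι a) = (φ a)⁻¹) ∧
      L.IsRegular ∧
      (∀ g : G, ∃ w ∈ L, evalWord φ w = g) ∧
      (∃ k : ℕ, ∀ w₁ ∈ L, ∀ w₂ ∈ L, ∀ a b : Option A,
        evalWord φ (a.toList ++ w₁ ++ b.toList) = evalWord φ w₂ →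
          unifDist φ (a.toList ++ w₁ ++ b.toList) w₂ ≤ k) ∧
      ¬ IsBiautomaticStructure φ ι L := by
  classical
  refine ⟨Multiplicative ℤ, inferInstance, L255.Ab, inferInstance, L255.phi, L255.iot,
    L255.L, ?_, ?_, ?_, ?_, ?_, ?_⟩
  · -- semigroup generation
    rw [eq_top_iff]
    rintro g -
    have he : evalWord L255.phi (L255.Ab.e :: L255.stdWord (Multiplicative.toAdd g)) = g := by
      rw [L255.eval_eq, L255.sv_cons, L255.sv_stdWord, L255.val_e, zero_add]
      exact ofAdd_toAdd g
    rw [← he]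
    exact L255.cons_mem_closure _ _
  · -- formal inversion
    intro a
    cases a <;> rfl
  · -- regularity
    exact ⟨L255.St, inferInstance, L255.dfa, L255.accepts_eq⟩
  · -- surjectivity
    intro g
    refine ⟨L255.stdWord (Multiplicative.toAdd g), ?_, ?_⟩
    · rw [L255.mem_L]
      unfold L255.stdWord
      split_ifs with h
      · exact Or.inl ⟨(Multiplicative.toAdd g).natAbs, 0, by simp⟩
      · exact Or.inr ⟨(Multiplicative.toAdd g).natAbs, 0, by simp⟩
    · rw [L255.eval_eq, L255.sv_stdWord]
      exact ofAdd_toAdd g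
  · -- two-sided fellow traveller property
    refine ⟨9, ?_⟩
    intro w₁ hw₁ w₂ hw₂ a b heq
    rcases (L255.mem_L).1 hw₁ with ⟨n, m, rfl⟩ | ⟨n, m, rfl⟩ <;>
      rcases (L255.mem_L).1 hw₂ with ⟨n', m', rfl⟩ | ⟨n', m', rfl⟩
    · exact L255.fellow a b _ _ n m n' m' (Or.inl rfl) (Or.inl rfl) heq
    · exact L255.fellow a b _ _ n m n' m' (Or.inl rfl) (Or.inr rfl) heq
    · exact L255.fellow a b _ _ n m n' m' (Or.inr rfl) (Or.inl rfl) heq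
    · exact L255.fellow a b _ _ n m n' m' (Or.inr rfl) (Or.inr rfl) heq
  · -- not biautomatic
    rintro ⟨-, -, -, k, hk⟩
    set u₁ : List L255.Ab := List.replicate (k + 1) L255.Ab.x with hu₁
    set u₂ : List L255.Ab :=
      List.replicate (k + 1) L255.Ab.e ++ List.replicate (k + 1) L255.Ab.x with hu₂
    have hm₁ : u₁ ∈ (wordInv L255.iot '' (L255.L : Set (List L255.Ab)) : Set (List L255.Ab)) := by
      refine ⟨List.replicate (k + 1) L255.Ab.y, ?_, ?_⟩
      · exact Or.inr ⟨k + 1, 0, by simp⟩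
      · simp [wordInv, List.map_replicate, L255.iot, hu₁]
    have hm₂ : u₂ ∈ (wordInv L255.iot '' (L255.L : Set (List L255.Ab)) : Set (List L255.Ab)) := by
      refine ⟨List.replicate (k + 1) L255.Ab.y ++ List.replicate (k + 1) L255.Ab.e, ?_, ?_⟩
      · exact Or.inr ⟨k + 1, k + 1, rfl⟩
      · simp [wordInv, List.map_replicate, L255.iot, hu₂]
    have heq : evalWord L255.phi (u₁ ++ (Option.toList (none : Option L255.Ab))) =
        evalWord L255.phi u₂ := by
      rw [L255.eval_eq, L255.eval_eq]
      congr 1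
      simp [hu₁, hu₂, L255.val_e]
    have h := hk u₁ hm₁ u₂ hm₂ none heq
    have hnil : u₁ ++ (Option.toList (none : Option L255.Ab)) = u₁ := by simp
    rw [hnil] at h
    have hge := L255.unifDist_ge u₁ u₂ (k + 1)
    rw [hu₁, hu₂] at hge
    simp only [L255.sv_take_append, L255.sv_take_replicate, List.length_replicate,
      L255.val_e, mul_zero, mul_one, Nat.sub_self, min_self, zero_add,
      show L255.val L255.Ab.x = 1 from rfl] at hge
    rw [← hu₁, ← hu₂] at hge
    omega
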